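/- The p-adic logarithmic distance satisfies the ultrametric-type triangle inequality: for every P, Q, T in P^1(K), δ_p(P,T) ≥ min{δ_p(P,Q), δ_p(Q,T)}. -/

import Mathlib

open IsDedekindDomain
open scoped Classical

variable {K : Type*}

/-- The normalized additive `p`-adic valuation on `K`, with `v_p(0) = ∞`. -/
noncomputable def addValp [Field K] [NumberField K]
    (p : HeightOneSpectrum (NumberField.RingOfIntegers K)) (x : K) : WithTop ℤ :=
  if hx : x = 0 then ⊤
  else ((- Multiplicative.toAdd (WithZero.unzero (((p.valuation K).ne_zero_iff).mpr hx)) : ℤ) :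
    WithTop ℤ)

/-- The `p`-adic logarithmic distance `δ_p` between points of `ℙ¹(K)` given by homogeneous
coordinates `P = (x₁, y₁)` and `Q = (x₂, y₂)`:
`δ_p(P,Q) = v_p(x₁y₂ - x₂y₁) - min (v_p x₁) (v_p y₁) - min (v_p x₂) (v_p y₂)`. -/
noncomputable def deltap [Field K] [NumberField K]
    (p : HeightOneSpectrum (NumberField.RingOfIntegers K)) (P Q : K × K) : WithTop ℤ :=
  addValp p (P.1 * Q.2 - Q.1 * P.2) - min (addValp p P.1) (addValp p P.2)
    - min (addValp p Q.1) (addValp p Q.2)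

section AuxLemmas

variable [Field K] [NumberField K] (p : HeightOneSpectrum (NumberField.RingOfIntegers K))

lemma addValp_ne_top {x : K} (hx : x ≠ 0) : addValp p x ≠ ⊤ := by
  simp [addValp, hx]

lemma addValp_mul (x y : K) : addValp p (x * y) = addValp p x + addValp p y := by
  by_cases hx : x = 0
  · simp [addValp, hx]
  by_cases hy : y = 0
  · simp [addValp, hy]
  have hxy : x * y ≠ 0 := mul_ne_zero hx hy
  simp only [addValp, dif_neg hx, dif_neg hy, dif_neg hxy]
  rw [← WithTop.coe_add, WithTop.coe_eq_coe]
  have h : WithZero.unzero (((p.valuation K).ne_zero_iff).mpr hxy)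
      = WithZero.unzero (((p.valuation K).ne_zero_iff).mpr hx)
        * WithZero.unzero (((p.valuation K).ne_zero_iff).mpr hy) := by
    rw [← WithZero.coe_inj]
    push_cast [WithZero.coe_unzero]
    exact map_mul _ x y
  rw [h, toAdd_mul]; ring

lemma addValp_le_of_le {x y : K} (hx : x ≠ 0) (hy : y ≠ 0)
    (h : p.valuation K x ≤ p.valuation K y) : addValp p y ≤ addValp p x := by
  simp only [addValp, dif_neg hx, dif_neg hy, WithTop.coe_le_coe, neg_le_neg_iff]
  have : WithZero.unzero (((p.valuation K).ne_zero_iff).mpr hx)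
      ≤ WithZero.unzero (((p.valuation K).ne_zero_iff).mpr hy) := by
    rw [← WithZero.coe_le_coe, WithZero.coe_unzero, WithZero.coe_unzero]; exact h
  exact Multiplicative.toAdd_le.mpr this

lemma min_le_addValp_add (x y : K) :
    min (addValp p x) (addValp p y) ≤ addValp p (x + y) := by
  by_cases hx : x = 0
  · simpa [hx] using min_le_right (addValp p x) (addValp p y)
  by_cases hy : y = 0
  · simpa [hy] using min_le_left (addValp p x) (addValp p y)
  by_cases hxy : x + y = 0
  · simp [addValp, hxy]
  have h := Valuation.map_add (p.valuation K) x y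
  rcases le_total (p.valuation K x) (p.valuation K y) with hle | hle
  · calc min (addValp p x) (addValp p y) ≤ addValp p y := min_le_right _ _
      _ ≤ addValp p (x + y) := addValp_le_of_le p hxy hy (h.trans (max_eq_right hle).le)
  · calc min (addValp p x) (addValp p y) ≤ addValp p x := min_le_left _ _
      _ ≤ addValp p (x + y) := addValp_le_of_le p hxy hx (h.trans (max_eq_left hle).le)

lemma sub_coe_eq (x : WithTop ℤ) (a : ℤ) :
    x - (a : WithTop ℤ) = x + ((-a : ℤ) : WithTop ℤ) := by
  induction x using WithTop.recTopCoe with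
  | top => simp [WithTop.LinearOrderedAddCommGroup.top_sub]
  | coe x =>
    rw [← WithTop.LinearOrderedAddCommGroup.coe_sub, ← WithTop.coe_add, WithTop.coe_eq_coe]
    ring

lemma add_coe_coe (x : WithTop ℤ) (u v : ℤ) :
    x + (u : WithTop ℤ) + (v : WithTop ℤ) = x + ((u + v : ℤ) : WithTop ℤ) := by
  rw [add_assoc, ← WithTop.coe_add]

end AuxLemmas

/-- the `p`-adic logarithmic distance satisfies the ultrametric-type triangle
inequality `δ_p(P,T) ≥ min (δ_p(P,Q)) (δ_p(Q,T))` for all points `P, Q, T` of `ℙ¹(K)`. -/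
theorem deltap_triangle [Field K] [NumberField K]
    (p : HeightOneSpectrum (NumberField.RingOfIntegers K))
    (P Q T : K × K) (hP : P ≠ 0) (hQ : Q ≠ 0) (hT : T ≠ 0) :
    min (deltap p P Q) (deltap p Q T) ≤ deltap p P T := by
  have hfin : ∀ R : K × K, R ≠ 0 → min (addValp p R.1) (addValp p R.2) ≠ ⊤ := by
    intro R hR
    rcases (not_and_or.mp (fun h => hR (Prod.ext h.1 h.2))) with h | h
    · intro hc; exact addValp_ne_top p h (top_le_iff.mp (hc ▸ min_le_left _ _))
    · intro hc; exact addValp_ne_top p h (top_le_iff.mp (hc ▸ min_le_right _ _))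
  obtain ⟨a, ha⟩ := WithTop.ne_top_iff_exists.mp (hfin P hP)
  obtain ⟨b, hb⟩ := WithTop.ne_top_iff_exists.mp (hfin Q hQ)
  obtain ⟨c, hc⟩ := WithTop.ne_top_iff_exists.mp (hfin T hT)
  have key : min (addValp p (P.1 * Q.2 - Q.1 * P.2) + (c : WithTop ℤ))
      (addValp p (Q.1 * T.2 - T.1 * Q.2) + (a : WithTop ℤ))
      ≤ addValp p (P.1 * T.2 - T.1 * P.2) + (b : WithTop ℤ) := by
    rcases min_cases (addValp p Q.1) (addValp p Q.2) with ⟨hb1, _⟩ | ⟨hb1, _⟩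
    · have id1 : (P.1 * Q.2 - Q.1 * P.2) * T.1 + (Q.1 * T.2 - T.1 * Q.2) * P.1
          = (P.1 * T.2 - T.1 * P.2) * Q.1 := by ring
      have h1 : min (addValp p (P.1 * Q.2 - Q.1 * P.2) + addValp p T.1)
          (addValp p (Q.1 * T.2 - T.1 * Q.2) + addValp p P.1)
          ≤ addValp p (P.1 * T.2 - T.1 * P.2) + addValp p Q.1 := by
        rw [← addValp_mul, ← addValp_mul, ← addValp_mul, ← id1]
        exact min_le_addValp_add p _ _
      refine le_trans (min_le_min ?_ ?_) (h1.trans_eq (by rw [← hb1, ← hb]))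
      · exact add_le_add_right (hc ▸ min_le_left _ _) _
      · exact add_le_add_right (ha ▸ min_le_left _ _) _
    · have id1 : (P.1 * Q.2 - Q.1 * P.2) * T.2 + (Q.1 * T.2 - T.1 * Q.2) * P.2
          = (P.1 * T.2 - T.1 * P.2) * Q.2 := by ring
      have h1 : min (addValp p (P.1 * Q.2 - Q.1 * P.2) + addValp p T.2)
          (addValp p (Q.1 * T.2 - T.1 * Q.2) + addValp p P.2)
          ≤ addValp p (P.1 * T.2 - T.1 * P.2) + addValp p Q.2 := by
        rw [← addValp_mul, ← addValp_mul, ← addValp_mul, ← id1]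
        exact min_le_addValp_add p _ _
      refine le_trans (min_le_min ?_ ?_) (h1.trans_eq (by rw [← hb1, ← hb]))
      · exact add_le_add_right (hc ▸ min_le_right _ _) _
      · exact add_le_add_right (ha ▸ min_le_right _ _) _
  have key2 := add_le_add_left key ((-a - b - c : ℤ) : WithTop ℤ)
  rw [← min_add_add_right, add_coe_coe, add_coe_coe, add_coe_coe] at key2
  show min (_ - _ - _) (_ - _ - _) ≤ _ - _ - _
  rw [← ha, ← hb, ← hc, sub_coe_eq, sub_coe_eq, sub_coe_eq, sub_coe_eq,
    sub_coe_eq, sub_coe_eq, add_coe_coe, add_coe_coe, add_coe_coe]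
  have e1 : c + (-a - b - c) = -a + -b := by ring
  have e2 : a + (-a - b - c) = -b + -c := by ring
  have e3 : b + (-a - b - c) = -a + -c := by ring
  rw [e1, e2, e3] at key2
  exact key2
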